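/- Let m ≥ 1 and let A_{m,k}(c) be defined by A_{0,k}(c) = 1 and A_{p+1,k}(c) = [[A_{p,k}(c), c·log(k/(k−1))·I_{2^p}], [0, A_{p,k}(c)]] for c > 0 and k ≥ 2. Then for N > m, the (1, 2^m) entry of the product ∏_{k=2}^{N} A_{m,k}(c) is at least c^m · log^m(N/m). -/

import Mathlib

/-- The `2^p × 2^p` upper-triangular matrices `A_{p,k}(c)` defined inductively by
`A_{0,k}(c) = 1` and
`A_{p+1,k}(c) = [[A_{p,k}(c), c·log(k/(k−1))·I], [0, A_{p,k}(c)]]`. -/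
noncomputable def KreissA : (p : ℕ) → ℕ → ℝ → Matrix (Fin (2 ^ p)) (Fin (2 ^ p)) ℝ
  | 0, _, _ => 1
  | p + 1, k, c =>
      Matrix.reindex (finSumFinEquiv.trans (finCongr (by ring)))
        (finSumFinEquiv.trans (finCongr (by ring)))
        (Matrix.fromBlocks (KreissA p k c) ((c * Real.log ((k : ℝ) / ((k : ℝ) - 1))) • 1)
          0 (KreissA p k c))

noncomputable def Esum : ℕ → List ℝ → ℝ
  | 0, _ => 1
  | m + 1, L => ∑ p ∈ Finset.range L.length, L.getD p 0 * Esum m (L.eraseIdx p)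

lemma eraseIdx_map' {α β : Type*} (f : α → β) (l : List α) (i : ℕ) :
    (l.map f).eraseIdx i = (l.eraseIdx i).map f := by
  simp [List.eraseIdx_eq_take_drop_succ, List.map_take, List.map_drop]

lemma sum_eq_sum_getD (L : List ℝ) : ∑ p ∈ Finset.range L.length, L.getD p 0 = L.sum := by
  induction L with
  | nil => simp
  | cons x l ih =>
    rw [List.length_cons, Finset.sum_range_succ']
    simp only [List.getD_cons_succ, List.getD_cons_zero, List.sum_cons, ih, add_comm]

lemma sum_eraseIdx' (L : List ℝ) (p : ℕ) (hp : p < L.length) :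
    (L.eraseIdx p).sum = L.sum - L.getD p 0 := by
  have h2 := List.getElem_cons_drop hp
  have hL1 : L.sum = (L.take p).sum + (L.drop p).sum := by
    rw [← List.sum_append, List.take_append_drop]
  have hL2 : (L.drop p).sum = L[p] + (L.drop (p + 1)).sum := by
    rw [← h2, List.sum_cons]
  rw [List.eraseIdx_eq_take_drop_succ, List.getD_eq_getElem _ _ hp, List.sum_append]
  linarith

lemma sublist_insert (L : List ℝ) (p : ℕ) (hp : p < L.length) (T : List ℝ)
    (hT : T.Sublist (L.eraseIdx p)) :
    ∃ T' : List ℝ, T'.Sublist L ∧ T'.length = T.length + 1 ∧ T'.sum = L.getD p 0 + T.sum := by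
  rw [List.eraseIdx_eq_take_drop_succ] at hT
  obtain ⟨T₁, T₂, rfl, h₁, h₂⟩ := List.sublist_append_iff.mp hT
  refine ⟨T₁ ++ L[p] :: T₂, ?_, by simp; omega, ?_⟩
  · have hs : (L[p] :: T₂).Sublist (L.drop p) := by
      rw [← List.getElem_cons_drop hp]
      exact h₂.cons₂ _
    have := h₁.append hs
    rwa [List.take_append_drop] at this
  · rw [List.getD_eq_getElem _ _ hp]
    simp only [List.sum_append, List.sum_cons]
    ring

lemma Esum_ge (m : ℕ) : ∀ (L : List ℝ) (a : ℕ → ℝ),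
    (∀ x ∈ L, 0 ≤ x) →
    (∀ T : List ℝ, T.Sublist L → T.sum ≤ a T.length) →
    (∀ j, j ≤ m → a j ≤ L.sum) →
    ∏ j ∈ Finset.range m, (L.sum - a j) ≤ Esum m L := by
  induction m with
  | zero => intro L a _ _ _; simp [Esum]
  | succ m ih =>
    intro L a h0 hA hS
    have ha0 : 0 ≤ a 0 := by simpa using hA [] (List.nil_sublist L)
    have hfac : ∀ j, j ≤ m → 0 ≤ L.sum - a (j + 1) := by
      intro j hj
      have := hS (j + 1) (by omega)
      linarith
    have hprod : 0 ≤ ∏ j ∈ Finset.range m, (L.sum - a (j + 1)) :=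
      Finset.prod_nonneg fun j hj => hfac j (Finset.mem_range.mp hj).le
    have key : ∀ p ∈ Finset.range L.length,
        L.getD p 0 * ∏ j ∈ Finset.range m, (L.sum - a (j + 1)) ≤
          L.getD p 0 * Esum m (L.eraseIdx p) := by
      intro p hp
      rw [Finset.mem_range] at hp
      have hx : 0 ≤ L.getD p 0 := by
        rw [List.getD_eq_getElem _ _ hp]
        exact h0 _ (List.getElem_mem hp)
      refine mul_le_mul_of_nonneg_left ?_ hx
      have hsum' := sum_eraseIdx' L p hp
      have := ih (L.eraseIdx p) (fun j => a (j + 1) - L.getD p 0)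
        (fun x hx' => h0 x ((L.eraseIdx_sublist p).mem hx'))
        (fun T hT => by
          show T.sum ≤ a (T.length + 1) - L.getD p 0
          obtain ⟨T', hT', hlen, hsumT⟩ := sublist_insert L p hp T hT
          have := hA T' hT'
          rw [hlen] at this
          linarith)
        (fun j hj => by
          show a (j + 1) - L.getD p 0 ≤ (L.eraseIdx p).sum
          have := hS (j + 1) (by omega)
          rw [hsum']
          linarith)
      calc ∏ j ∈ Finset.range m, (L.sum - a (j + 1))
          = ∏ j ∈ Finset.range m,
              ((L.eraseIdx p).sum - (a (j + 1) - L.getD p 0)) := by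
            refine Finset.prod_congr rfl fun j _ => ?_
            rw [hsum']; ring
        _ ≤ Esum m (L.eraseIdx p) := this
    calc ∏ j ∈ Finset.range (m + 1), (L.sum - a j)
        = (∏ j ∈ Finset.range m, (L.sum - a (j + 1))) * (L.sum - a 0) :=
          Finset.prod_range_succ' _ m
      _ ≤ (∏ j ∈ Finset.range m, (L.sum - a (j + 1))) * L.sum := by
          refine mul_le_mul_of_nonneg_left (by linarith) hprod
      _ = ∑ p ∈ Finset.range L.length,
            L.getD p 0 * ∏ j ∈ Finset.range m, (L.sum - a (j + 1)) := by
          rw [← Finset.sum_mul, sum_eq_sum_getD, mul_comm]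
      _ ≤ ∑ p ∈ Finset.range L.length, L.getD p 0 * Esum m (L.eraseIdx p) :=
          Finset.sum_le_sum key
      _ = Esum (m + 1) L := by rw [Esum]

lemma blocks_prod {n : Type*} [Fintype n] [DecidableEq n]
    (l : List (Matrix n n ℝ × ℝ)) :
    (l.map fun q => Matrix.fromBlocks q.1 (q.2 • (1 : Matrix n n ℝ)) 0 q.1).prod =
      Matrix.fromBlocks (l.map Prod.fst).prod
        (∑ p ∈ Finset.range l.length,
          (l.getD p (1, 0)).2 • ((l.eraseIdx p).map Prod.fst).prod)
        0 (l.map Prod.fst).prod := by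
  induction l with
  | nil => simp [Matrix.fromBlocks_one]
  | cons q l ih =>
    rw [List.map_cons, List.prod_cons, ih, Matrix.fromBlocks_multiply,
      List.map_cons, List.prod_cons, List.length_cons, Finset.sum_range_succ']
    simp only [List.getD_cons_succ, List.getD_cons_zero, List.eraseIdx_cons_succ,
      List.eraseIdx_cons_zero, List.map_cons, List.prod_cons, Matrix.mul_zero,
      Matrix.zero_mul, add_zero, zero_add, smul_mul_assoc, one_mul,
      Finset.mul_sum, mul_smul_comm, smul_zero, Finset.sum_const_zero]

lemma corner_eq (c : ℝ) (m : ℕ) : ∀ ks : List ℕ,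
    ((ks.map fun k => KreissA m k c).prod)
        ⟨0, Nat.two_pow_pos m⟩ ⟨2 ^ m - 1, Nat.sub_lt (Nat.two_pow_pos m) one_pos⟩ =
      Esum m (ks.map fun k : ℕ => c * Real.log ((k : ℝ) / ((k : ℝ) - 1))) := by
  induction m with
  | zero =>
    intro ks
    have h1 : ((ks.map fun k => KreissA 0 k c)).prod = 1 := by
      apply List.prod_eq_one
      intro M hM
      obtain ⟨k, _, rfl⟩ := List.mem_map.mp hM
      rw [KreissA]
    rw [h1, Esum]
    exact Matrix.one_apply_eq _
  | succ m ih =>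
    intro ks
    set e : Fin (2 ^ m) ⊕ Fin (2 ^ m) ≃ Fin (2 ^ (m + 1)) :=
      finSumFinEquiv.trans (finCongr (by ring)) with he
    set l : List (Matrix (Fin (2 ^ m)) (Fin (2 ^ m)) ℝ × ℝ) :=
      ks.map (fun k => (KreissA m k c, c * Real.log ((k : ℝ) / ((k : ℝ) - 1)))) with hldef
    have hrw : (ks.map fun k => KreissA (m + 1) k c) =
        (l.map fun q => Matrix.fromBlocks q.1 (q.2 • 1) 0 q.1).map
          (Matrix.reindexAlgEquiv ℝ ℝ e) := by
      rw [hldef, List.map_map, List.map_map]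
      refine List.map_congr_left fun k _ => ?_
      rw [KreissA]
      rfl
    rw [hrw, ← map_list_prod (Matrix.reindexAlgEquiv ℝ ℝ e), blocks_prod,
      Matrix.reindexAlgEquiv_apply, Matrix.reindex_apply, Matrix.submatrix_apply]
    have h00 : e.symm ⟨0, Nat.two_pow_pos (m + 1)⟩ =
        Sum.inl (⟨0, Nat.two_pow_pos m⟩ : Fin (2 ^ m)) := by
      rw [Equiv.symm_apply_eq]
      simp [he, Fin.ext_iff]
    have h01 : e.symm ⟨2 ^ (m + 1) - 1, Nat.sub_lt (Nat.two_pow_pos (m + 1)) one_pos⟩ =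
        Sum.inr (⟨2 ^ m - 1, Nat.sub_lt (Nat.two_pow_pos m) one_pos⟩ : Fin (2 ^ m)) := by
      rw [Equiv.symm_apply_eq]
      have h1 : 1 ≤ 2 ^ m := Nat.one_le_two_pow
      have h2 : 2 ^ (m + 1) = 2 ^ m * 2 := pow_succ 2 m
      simp [he, Fin.ext_iff]
      omega
    rw [h00, h01, Matrix.fromBlocks_apply₁₂]
    rw [Esum]
    have hlen : (ks.map fun k : ℕ => c * Real.log ((k : ℝ) / ((k : ℝ) - 1))).length = ks.length :=
      List.length_map _
    have hllen : l.length = ks.length := List.length_map _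
    rw [Matrix.sum_apply, hlen, hllen]
    refine Finset.sum_congr rfl fun p hp => ?_
    rw [Finset.mem_range] at hp
    rw [Matrix.smul_apply, smul_eq_mul, hldef]
    rw [List.getD_eq_getElem _ _ (by simpa using hp), List.getElem_map,
      List.getD_eq_getElem _ _ (by simpa using hp), List.getElem_map,
      eraseIdx_map', eraseIdx_map', List.map_map, ← ih (ks.eraseIdx p)]
    rfl

lemma logstep (s i : ℕ) (h : s ≤ i) :
    Real.log ((i : ℝ) + 2) - Real.log ((i : ℝ) + 1) ≤
      Real.log ((s : ℝ) + 2) - Real.log ((s : ℝ) + 1) := by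
  have hs : (s : ℝ) ≤ i := Nat.cast_le.mpr h
  have h0 : (0:ℝ) ≤ s := Nat.cast_nonneg s
  have h1 : (0:ℝ) ≤ i := Nat.cast_nonneg i
  rw [sub_le_sub_iff, ← Real.log_mul (by positivity) (by positivity),
    ← Real.log_mul (by positivity) (by positivity)]
  apply Real.log_le_log (by positivity)
  nlinarith

lemma sorted_log_sum : ∀ (l : List ℕ), l.Pairwise (· < ·) → ∀ s : ℕ, (∀ i ∈ l, s ≤ i) →
    (l.map fun i : ℕ => Real.log ((i : ℝ) + 2) - Real.log ((i : ℝ) + 1)).sum ≤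
      Real.log ((s : ℝ) + (l.length : ℝ) + 1) - Real.log ((s : ℝ) + 1) := by
  intro l
  induction l with
  | nil => intro _ s _; simp
  | cons i l ih =>
    intro hsort s hs
    have hhead : Real.log ((i : ℝ) + 2) - Real.log ((i : ℝ) + 1) ≤
        Real.log ((s : ℝ) + 2) - Real.log ((s : ℝ) + 1) :=
      logstep s i (hs i (List.mem_cons_self))
    have htail := ih hsort.of_cons (s + 1) (fun j hj => by
      have h1 := List.rel_of_pairwise_cons hsort hj
      have h2 := hs i (List.mem_cons_self)
      omega)
    rw [List.map_cons, List.sum_cons]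
    simp only [List.length_cons]
    push_cast at htail ⊢
    have e1 : (s:ℝ) + 1 + (l.length:ℝ) + 1 = (s:ℝ) + ((l.length:ℝ) + 1) + 1 := by ring
    have e2 : (s:ℝ) + 1 + 1 = (s:ℝ) + 2 := by ring
    rw [e1, e2] at htail
    linarith

lemma tele : ∀ n : ℕ,
    ((List.range n).map fun i : ℕ => Real.log ((i : ℝ) + 2) - Real.log ((i : ℝ) + 1)).sum =
      Real.log ((n : ℝ) + 1) := by
  intro n
  induction n with
  | zero => simp
  | succ n ih =>
    rw [List.range_succ, List.map_append, List.sum_append, ih]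
    push_cast
    simp
    ring

theorem corner_entry_prod_KreissA_ge (m : ℕ) (hm : 1 ≤ m) (N : ℕ) (hN : m < N)
    (c : ℝ) (hc : 0 < c) :
    c ^ m * (Real.log ((N : ℝ) / m)) ^ m ≤
      (((List.range (N - 1)).map fun i => KreissA m (i + 2) c).prod)
        ⟨0, by positivity⟩ ⟨2 ^ m - 1, Nat.sub_lt (by positivity) one_pos⟩ := by
  have hN1 : 1 ≤ N := by omega
  have hkey := corner_eq c m ((List.range (N - 1)).map (fun i => i + 2))
  rw [List.map_map] at hkey
  set L : List ℝ :=
    (List.range (N - 1)).map fun i : ℕ =>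
      c * (Real.log ((i : ℝ) + 2) - Real.log ((i : ℝ) + 1)) with hLdef
  have hLrw : ((List.range (N - 1)).map (fun i => i + 2)).map
      (fun k : ℕ => c * Real.log ((k : ℝ) / ((k : ℝ) - 1))) = L := by
    rw [hLdef, List.map_map]
    refine List.map_congr_left fun i _ => ?_
    show c * Real.log (((i + 2 : ℕ) : ℝ) / (((i + 2 : ℕ) : ℝ) - 1)) = _
    push_cast
    rw [show (i : ℝ) + 2 - 1 = (i : ℝ) + 1 by ring,
      Real.log_div (by positivity) (by positivity)]
  rw [hLrw] at hkey
  have hLsum : L.sum = c * Real.log N := by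
    rw [hLdef, List.sum_map_mul_left, tele]
    congr 2
    push_cast [Nat.cast_sub hN1]
    ring
  set a : ℕ → ℝ := fun j => c * Real.log ((j : ℝ) + 1) with hadef
  have h0 : ∀ x ∈ L, 0 ≤ x := by
    intro x hx
    rw [hLdef] at hx
    obtain ⟨i, _, rfl⟩ := List.mem_map.mp hx
    have : Real.log ((i : ℝ) + 1) ≤ Real.log ((i : ℝ) + 2) :=
      Real.log_le_log (by positivity) (by linarith)
    nlinarith
  have hA : ∀ T : List ℝ, T.Sublist L → T.sum ≤ a T.length := by
    intro T hT
    rw [hLdef] at hT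
    obtain ⟨T', hT', rfl⟩ := List.sublist_map_iff.mp hT
    have hsorted : T'.Pairwise (· < ·) := List.pairwise_lt_range.sublist hT'
    have := sorted_log_sum T' hsorted 0 (fun i _ => Nat.zero_le i)
    rw [List.sum_map_mul_left, List.length_map, hadef]
    have hc' : (0:ℝ) ≤ c := hc.le
    have h2 := mul_le_mul_of_nonneg_left this hc'
    simpa using h2
  have hS : ∀ j, j ≤ m → a j ≤ L.sum := by
    intro j hj
    rw [hLsum, hadef]
    refine mul_le_mul_of_nonneg_left ?_ hc.le
    apply Real.log_le_log (by positivity)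
    have : j + 1 ≤ N := by omega
    exact_mod_cast this
  have hmain := Esum_ge m L a h0 hA hS
  have hm' : (0:ℝ) < m := by exact_mod_cast hm
  have hNm : (1:ℝ) ≤ (N:ℝ) / m := by
    rw [le_div_iff₀ hm']
    have : m ≤ N := hN.le
    simpa using (Nat.cast_le.mpr this : (m:ℝ) ≤ N)
  have hlogNm : 0 ≤ Real.log ((N:ℝ) / m) := Real.log_nonneg hNm
  have hstep : c ^ m * (Real.log ((N : ℝ) / m)) ^ m ≤
      ∏ j ∈ Finset.range m, (L.sum - a j) := by
    have hconst : (c * Real.log ((N:ℝ)/m)) ^ m =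
        ∏ _j ∈ Finset.range m, (c * Real.log ((N:ℝ)/m)) := by
      rw [Finset.prod_const, Finset.card_range]
    rw [← mul_pow, hconst]
    refine Finset.prod_le_prod (fun j _ => by positivity) ?_
    intro j hj
    rw [Finset.mem_range] at hj
    rw [hLsum, hadef, ← mul_sub]
    refine mul_le_mul_of_nonneg_left ?_ hc.le
    rw [Real.log_div (by positivity) (by positivity)]
    have : Real.log ((j : ℝ) + 1) ≤ Real.log m := by
      apply Real.log_le_log (by positivity)
      have : j + 1 ≤ m := hj
      exact_mod_cast this
    linarith
  exact le_trans (le_trans hstep hmain) (le_of_eq hkey.symm)
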